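/- Let Σ be a field of subsets of a nonempty set X and let μ : Σ → [0,∞) be a nonnegative, finitely additive, bounded map (μ(A∪B) = μ(A)+μ(B) for all disjoint A, B ∈ Σ). Then the pseudometric space (Σ, d_μ) is complete if and only if for every increasing sequence (A_n)_{n∈ℕ} in Σ there exists A ∈ Σ such that μ(A_n \ A) = 0 for all n ∈ ℕ and μ(A) = lim_{n→∞} μ(A_n). -/
import Mathlib
open Filter Topology

section MinAux

lemma min_lt_strip {x ε : ℝ} (h : min 1 x < ε) (hε : ε ≤ 1) : x < ε := by
  rcases min_cases 1 x with ⟨he, hle⟩ | ⟨he, hlt⟩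
  · rw [he] at h; linarith
  · rwa [he] at h

lemma tendsto_of_min_tendsto {f : ℕ → ℝ}
    (h : Filter.Tendsto (fun n => min 1 (f n)) Filter.atTop (nhds 0)) :
    Filter.Tendsto f Filter.atTop (nhds 0) := by
  have hev : ∀ᶠ n in Filter.atTop, min 1 (f n) = f n := by
    have := h.eventually (eventually_lt_nhds (by norm_num : (0:ℝ) < 1))
    filter_upwards [this] with n hn
    rcases min_cases 1 (f n) with ⟨he, _⟩ | ⟨he, _⟩
    · rw [he] at hn; linarith
    · exact he
  exact h.congr' hev

end MinAux

namespace CompChar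

variable {X : Type*}

def partUnion (B : ℕ → Set X) (k : ℕ) : ℕ → Set X
  | 0 => B k
  | m+1 => partUnion B k m ∪ B (k+m+1)

lemma partUnion_zero (B : ℕ → Set X) (k : ℕ) : partUnion B k 0 = B k := rfl

lemma partUnion_succ (B : ℕ → Set X) (k m : ℕ) :
    partUnion B k (m+1) = partUnion B k m ∪ B (k+m+1) := rfl

lemma partUnion_mono (B : ℕ → Set X) (k : ℕ) : Monotone (partUnion B k) :=
  monotone_nat_of_le_succ fun m => by rw [partUnion_succ]; exact Set.subset_union_left

lemma self_subset_partUnion (B : ℕ → Set X) (k m : ℕ) : B k ⊆ partUnion B k m :=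
  (partUnion_mono B k (Nat.zero_le m))

lemma last_subset_partUnion (B : ℕ → Set X) (k m : ℕ) : B (k+m) ⊆ partUnion B k m := by
  cases m with
  | zero => exact subset_rfl
  | succ m => rw [partUnion_succ]; exact Set.subset_union_right

lemma partUnion_succ_subset (B : ℕ → Set X) (k m : ℕ) :
    partUnion B (k+1) m ⊆ partUnion B k (m+1) := by
  induction m with
  | zero =>
    rw [partUnion_zero, partUnion_succ, partUnion_zero]
    exact Set.subset_union_right
  | succ m ih =>
    rw [partUnion_succ, partUnion_succ B k (m+1)]
    apply Set.union_subset
    · exact ih.trans (partUnion_mono B k (Nat.le_succ _))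
    · rw [show k+1+m+1 = k+(m+1)+1 by omega]
      exact Set.subset_union_right

def partInter (V : ℕ → Set X) : ℕ → Set X
  | 0 => V 0
  | k+1 => partInter V k ∩ V (k+1)

lemma partInter_zero (V : ℕ → Set X) : partInter V 0 = V 0 := rfl

lemma partInter_succ (V : ℕ → Set X) (k : ℕ) :
    partInter V (k+1) = partInter V k ∩ V (k+1) := rfl

lemma partInter_subset (V : ℕ → Set X) (k : ℕ) : partInter V k ⊆ V k := by
  cases k with
  | zero => exact subset_rfl
  | succ k => rw [partInter_succ]; exact Set.inter_subset_right

lemma partInter_anti (V : ℕ → Set X) : Antitone (partInter V) :=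
  antitone_nat_of_succ_le fun k => by rw [partInter_succ]; exact Set.inter_subset_left

structure Ctx (X : Type*) where
  S : Set (Set X)
  μ : Set X → ℝ
  hne : S.Nonempty
  hunion : ∀ A ∈ S, ∀ B ∈ S, A ∪ B ∈ S
  hcompl : ∀ A ∈ S, Aᶜ ∈ S
  hnonneg : ∀ A ∈ S, 0 ≤ μ A
  hadd : ∀ A ∈ S, ∀ B ∈ S, Disjoint A B → μ (A ∪ B) = μ A + μ B

namespace Ctx
variable {X : Type*} (c : Ctx X) {A B : Set X}

lemma inter_mem (hA : A ∈ c.S) (hB : B ∈ c.S) : A ∩ B ∈ c.S := by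
  have h := c.hcompl _ (c.hunion _ (c.hcompl _ hA) _ (c.hcompl _ hB))
  simpa [Set.compl_union] using h

lemma diff_mem (hA : A ∈ c.S) (hB : B ∈ c.S) : A \ B ∈ c.S := by
  rw [Set.diff_eq]; exact c.inter_mem hA (c.hcompl _ hB)

lemma symmDiff_mem (hA : A ∈ c.S) (hB : B ∈ c.S) : symmDiff A B ∈ c.S := by
  rw [Set.symmDiff_def]
  exact c.hunion _ (c.diff_mem hA hB) _ (c.diff_mem hB hA)

lemma empty_mem : (∅ : Set X) ∈ c.S := by
  obtain ⟨A, hA⟩ := c.hne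
  have h := c.hcompl _ (c.hunion _ hA _ (c.hcompl _ hA))
  simpa using h

lemma mu_empty : c.μ ∅ = 0 := by
  have h := c.hadd _ c.empty_mem _ c.empty_mem (by simp)
  simp at h
  linarith

lemma mono (hA : A ∈ c.S) (hB : B ∈ c.S) (h : A ⊆ B) : c.μ A ≤ c.μ B := by
  have h1 : c.μ (A ∪ B \ A) = c.μ A + c.μ (B \ A) :=
    c.hadd _ hA _ (c.diff_mem hB hA) disjoint_sdiff_self_right
  rw [Set.union_diff_cancel h] at h1
  have := c.hnonneg _ (c.diff_mem hB hA)
  linarith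

lemma subadd (hA : A ∈ c.S) (hB : B ∈ c.S) : c.μ (A ∪ B) ≤ c.μ A + c.μ B := by
  have h1 : c.μ (A ∪ B \ A) = c.μ A + c.μ (B \ A) :=
    c.hadd _ hA _ (c.diff_mem hB hA) disjoint_sdiff_self_right
  rw [Set.union_diff_self] at h1
  have := c.mono (c.diff_mem hB hA) hB Set.diff_subset
  linarith

lemma diff_add_inter (hA : A ∈ c.S) (hB : B ∈ c.S) :
    c.μ (A \ B) + c.μ (A ∩ B) = c.μ A := by
  have h1 : c.μ (A \ B ∪ A ∩ B) = c.μ (A \ B) + c.μ (A ∩ B) :=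
    c.hadd _ (c.diff_mem hA hB) _ (c.inter_mem hA hB)
      (Set.disjoint_left.2 fun x hx hx2 => hx.2 hx2.2)
  rw [Set.diff_union_inter] at h1
  exact h1.symm

lemma mu_symmDiff (hA : A ∈ c.S) (hB : B ∈ c.S) :
    c.μ (symmDiff A B) = c.μ (A \ B) + c.μ (B \ A) := by
  rw [Set.symmDiff_def]
  exact c.hadd _ (c.diff_mem hA hB) _ (c.diff_mem hB hA)
    (Set.disjoint_left.2 fun x hx hx2 => hx2.2 hx.1)

lemma abs_sub_le (hA : A ∈ c.S) (hB : B ∈ c.S) :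
    |c.μ A - c.μ B| ≤ c.μ (symmDiff A B) := by
  have h1 := c.diff_add_inter hA hB
  have h2 := c.diff_add_inter hB hA
  rw [Set.inter_comm] at h2
  have h3 := c.mu_symmDiff hA hB
  have n1 := c.hnonneg _ (c.diff_mem hA hB)
  have n2 := c.hnonneg _ (c.diff_mem hB hA)
  rw [abs_le]
  constructor <;> linarith

lemma triangle (hA : A ∈ c.S) (hB : B ∈ c.S) {C : Set X} (hC : C ∈ c.S) :
    c.μ (symmDiff A C) ≤ c.μ (symmDiff A B) + c.μ (symmDiff B C) := by
  have h : symmDiff A C ⊆ symmDiff A B ∪ symmDiff B C := symmDiff_triangle A B C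
  calc c.μ (symmDiff A C) ≤ c.μ (symmDiff A B ∪ symmDiff B C) :=
        c.mono (c.symmDiff_mem hA hC)
          (c.hunion _ (c.symmDiff_mem hA hB) _ (c.symmDiff_mem hB hC)) h
    _ ≤ _ := c.subadd (c.symmDiff_mem hA hB) (c.symmDiff_mem hB hC)

/-- If `μ (A n \ L) = 0` and `μ (A n) → μ L` then `μ (A n ∆ L) → 0`. -/
lemma tendsto_symmDiff_of_null (A : ℕ → Set X) (L : Set X)
    (hA : ∀ n, A n ∈ c.S) (hL : L ∈ c.S)
    (hnull : ∀ n, c.μ (A n \ L) = 0)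
    (htend : Tendsto (fun n => c.μ (A n)) atTop (nhds (c.μ L))) :
    Tendsto (fun n => c.μ (symmDiff (A n) L)) atTop (nhds 0) := by
  have key : ∀ n, c.μ (symmDiff (A n) L) = c.μ L - c.μ (A n) := by
    intro n
    have h1 := c.diff_add_inter (hA n) hL
    have h2 := c.diff_add_inter hL (hA n)
    rw [Set.inter_comm] at h2
    have h3 := c.mu_symmDiff (hA n) hL
    rw [hnull n] at h1 h3
    linarith
  simp only [key]
  have := htend.const_sub (c.μ L)
  simpa using this

lemma forward (hbdd : ∃ M, ∀ A ∈ c.S, c.μ A ≤ M)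
    (hcomp : ∀ A : ℕ → Set X, (∀ n, A n ∈ c.S) →
      (∀ ε : ℝ, 0 < ε → ∃ N, ∀ m ≥ N, ∀ n ≥ N,
        min 1 (c.μ (symmDiff (A m) (A n))) < ε) →
      ∃ L ∈ c.S, Tendsto (fun n => min 1 (c.μ (symmDiff (A n) L))) atTop (nhds 0)) :
    ∀ A : ℕ → Set X, (∀ n, A n ∈ c.S) → (∀ m n, m ≤ n → A m ⊆ A n) →
      ∃ L ∈ c.S, (∀ n, c.μ (A n \ L) = 0) ∧
        Tendsto (fun n => c.μ (A n)) atTop (nhds (c.μ L)) := by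
  intro A hAS hmono
  obtain ⟨M, hM⟩ := hbdd
  have hμmono : Monotone (fun n => c.μ (A n)) :=
    monotone_nat_of_le_succ fun n => c.mono (hAS n) (hAS (n+1)) (hmono n (n+1) (Nat.le_succ n))
  have hbdd2 : BddAbove (Set.range fun n => c.μ (A n)) :=
    ⟨M, by rintro x ⟨n, rfl⟩; exact hM _ (hAS n)⟩
  have hconv : Tendsto (fun n => c.μ (A n)) atTop (nhds (⨆ n, c.μ (A n))) :=
    tendsto_atTop_ciSup hμmono hbdd2
  have hcs : CauchySeq (fun n => c.μ (A n)) := hconv.cauchySeq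
  rw [Metric.cauchySeq_iff] at hcs
  have hsd : ∀ m n, m ≤ n → c.μ (symmDiff (A m) (A n)) = c.μ (A n) - c.μ (A m) := by
    intro m n h
    have h1 := c.diff_add_inter (hAS n) (hAS m)
    rw [Set.inter_eq_self_of_subset_right (hmono m n h)] at h1
    rw [symmDiff_of_le (hmono m n h)]
    linarith
  obtain ⟨L, hL, htendmin⟩ := hcomp A hAS (by
    intro ε hε
    obtain ⟨N, hN⟩ := hcs ε hε
    refine ⟨N, fun m hm n hn => ?_⟩
    have hd : |c.μ (A m) - c.μ (A n)| < ε := by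
      have := hN m hm n hn; rwa [Real.dist_eq] at this
    rw [abs_lt] at hd
    rcases le_total m n with h | h
    · calc min 1 (c.μ (symmDiff (A m) (A n))) ≤ c.μ (symmDiff (A m) (A n)) :=
          min_le_right _ _
        _ < ε := by rw [hsd m n h]; linarith
    · calc min 1 (c.μ (symmDiff (A m) (A n))) ≤ c.μ (symmDiff (A m) (A n)) :=
          min_le_right _ _
        _ < ε := by rw [symmDiff_comm, hsd n m h]; linarith)
  have htend0 : Tendsto (fun n => c.μ (symmDiff (A n) L)) atTop (nhds 0) :=
    tendsto_of_min_tendsto htendmin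
  refine ⟨L, hL, ?_, ?_⟩
  · intro n
    have hle : ∀ m ≥ n, c.μ (A n \ L) ≤ c.μ (symmDiff (A m) L) := by
      intro m hm
      have hsub : A n \ L ⊆ symmDiff (A m) L := fun x hx =>
        Set.mem_symmDiff.2 (Or.inl ⟨hmono n m hm hx.1, hx.2⟩)
      exact c.mono (c.diff_mem (hAS n) hL) (c.symmDiff_mem (hAS m) hL) hsub
    have h0 : c.μ (A n \ L) ≤ 0 :=
      ge_of_tendsto htend0 (eventually_atTop.2 ⟨n, hle⟩)
    exact le_antisymm h0 (c.hnonneg _ (c.diff_mem (hAS n) hL))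
  · rw [tendsto_iff_dist_tendsto_zero]
    apply squeeze_zero (fun n => dist_nonneg) (fun n => ?_) htend0
    rw [Real.dist_eq]; exact c.abs_sub_le (hAS n) hL


lemma backward
    (hAP0 : ∀ A : ℕ → Set X, (∀ n, A n ∈ c.S) → (∀ m n, m ≤ n → A m ⊆ A n) →
      ∃ L ∈ c.S, (∀ n, c.μ (A n \ L) = 0) ∧
        Tendsto (fun n => c.μ (A n)) atTop (nhds (c.μ L))) :
    ∀ A : ℕ → Set X, (∀ n, A n ∈ c.S) →
      (∀ ε : ℝ, 0 < ε → ∃ N, ∀ m ≥ N, ∀ n ≥ N,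
        min 1 (c.μ (symmDiff (A m) (A n))) < ε) →
      ∃ L ∈ c.S, Tendsto (fun n => min 1 (c.μ (symmDiff (A n) L))) atTop (nhds 0) := by
  intro A hAS hC
  have hepos : ∀ k : ℕ, (0:ℝ) < (2:ℝ)⁻¹ ^ (k+2) := fun k => pow_pos (by norm_num) _
  have hele : ∀ k : ℕ, (2:ℝ)⁻¹ ^ (k+2) ≤ 1 := fun k => pow_le_one₀ (by norm_num) (by norm_num)
  have hNk : ∀ k : ℕ, ∃ N, ∀ m ≥ N, ∀ n ≥ N,
      c.μ (symmDiff (A m) (A n)) < (2:ℝ)⁻¹ ^ (k+2) := by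
    intro k
    obtain ⟨N, hN⟩ := hC _ (hepos k)
    exact ⟨N, fun m hm n hn => min_lt_strip (hN m hm n hn) (hele k)⟩
  choose N hN using hNk
  -- the index subsequence
  set idx : ℕ → ℕ := fun k => Nat.rec (N 0) (fun k ih => max (ih + 1) (N (k+1))) k with hidx
  have hidxs : ∀ k, idx (k+1) = max (idx k + 1) (N (k+1)) := fun k => rfl
  have hidxge : ∀ k, N k ≤ idx k := by
    intro k; cases k with
    | zero => exact le_refl _
    | succ k => rw [hidxs]; exact le_max_right _ _
  have hidxlt : ∀ k, idx k < idx (k+1) := by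
    intro k; rw [hidxs]; exact lt_of_lt_of_le (Nat.lt_succ_self _) (le_max_left _ _)
  set B : ℕ → Set X := fun k => A (idx k) with hBdef
  have hBS : ∀ k, B k ∈ c.S := fun k => hAS _
  have hBB : ∀ k, c.μ (symmDiff (B k) (B (k+1))) < (2:ℝ)⁻¹ ^ (k+2) := fun k =>
    hN k _ (hidxge k) _ (le_of_lt (lt_of_le_of_lt (hidxge k) (hidxlt k)))
  -- partial unions and their limits
  have hUmem : ∀ k m, partUnion B k m ∈ c.S := by
    intro k m
    induction m with
    | zero => exact hBS k
    | succ m ih => rw [partUnion_succ]; exact c.hunion _ ih _ (hBS (k+m+1))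
  have hVex : ∀ k, ∃ L ∈ c.S, (∀ m, c.μ (partUnion B k m \ L) = 0) ∧
      Tendsto (fun m => c.μ (partUnion B k m)) atTop (nhds (c.μ L)) :=
    fun k => hAP0 (partUnion B k) (hUmem k) (fun m n h => partUnion_mono B k h)
  choose V hVS hVnull hVtend using hVex
  have hVΔ : ∀ k, Tendsto (fun m => c.μ (symmDiff (partUnion B k m) (V k))) atTop (nhds 0) :=
    fun k => c.tendsto_symmDiff_of_null _ _ (hUmem k) (hVS k) (hVnull k) (hVtend k)
  -- bound on μ(partUnion \ B k)
  have hUB : ∀ k m, c.μ (partUnion B k m \ B k) ≤ (2:ℝ)⁻¹^(k+1) - (2:ℝ)⁻¹^(k+m+1) := by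
    intro k m
    induction m with
    | zero =>
      rw [partUnion_zero]
      simp [c.mu_empty]
    | succ m ih =>
      have hsub : partUnion B k (m+1) \ B k ⊆
          (partUnion B k m \ B k) ∪ symmDiff (B (k+m)) (B (k+m+1)) := by
        intro x hx
        rw [partUnion_succ] at hx
        rcases hx.1 with h | h
        · exact Or.inl ⟨h, hx.2⟩
        · by_cases hxm : x ∈ B (k+m)
          · exact Or.inl ⟨last_subset_partUnion B k m hxm, hx.2⟩
          · exact Or.inr (Set.mem_symmDiff.2 (Or.inr ⟨h, hxm⟩))
      have h1 : c.μ (partUnion B k (m+1) \ B k) ≤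
          c.μ (partUnion B k m \ B k) + c.μ (symmDiff (B (k+m)) (B (k+m+1))) := by
        calc c.μ (partUnion B k (m+1) \ B k)
            ≤ c.μ ((partUnion B k m \ B k) ∪ symmDiff (B (k+m)) (B (k+m+1))) :=
              c.mono (c.diff_mem (hUmem k (m+1)) (hBS k))
                (c.hunion _ (c.diff_mem (hUmem k m) (hBS k)) _
                  (c.symmDiff_mem (hBS (k+m)) (hBS (k+m+1)))) hsub
          _ ≤ _ := c.subadd (c.diff_mem (hUmem k m) (hBS k))
                (c.symmDiff_mem (hBS (k+m)) (hBS (k+m+1)))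
      have h2 := hBB (k+m)
      have h3 : (2:ℝ)⁻¹^(k+m+2) = (2:ℝ)⁻¹^(k+m+1) * 2⁻¹ := pow_succ _ _
      have h4 : (2:ℝ)⁻¹^(k+(m+1)+1) = (2:ℝ)⁻¹^(k+m+2) := by
        rw [show k+(m+1)+1 = k+m+2 by omega]
      rw [h4]
      nlinarith [hepos (k+m)]
  -- μ(B k ∆ V k) ≤ 2⁻¹^(k+1)
  have hBU : ∀ k m, c.μ (symmDiff (B k) (partUnion B k m)) ≤ (2:ℝ)⁻¹^(k+1) := by
    intro k m
    rw [symmDiff_of_le (self_subset_partUnion B k m)]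
    have := hUB k m
    have := hepos (k+m-1)
    have h5 : (0:ℝ) < (2:ℝ)⁻¹^(k+m+1) := pow_pos (by norm_num) _
    linarith [hUB k m]
  have hBV : ∀ k, c.μ (symmDiff (B k) (V k)) ≤ (2:ℝ)⁻¹^(k+1) := by
    intro k
    have hle : ∀ m, c.μ (symmDiff (B k) (V k)) ≤
        (2:ℝ)⁻¹^(k+1) + c.μ (symmDiff (partUnion B k m) (V k)) := by
      intro m
      have ht := c.triangle (hBS k) (hUmem k m) (hVS k)
      have := hBU k m
      linarith
    have htl : Tendsto (fun m => (2:ℝ)⁻¹^(k+1) + c.μ (symmDiff (partUnion B k m) (V k)))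
        atTop (nhds ((2:ℝ)⁻¹^(k+1))) := by
      have := (hVΔ k).const_add ((2:ℝ)⁻¹^(k+1))
      simpa using this
    exact ge_of_tendsto htl (Eventually.of_forall hle)
  -- V is decreasing mod null
  have hVVnull : ∀ k, c.μ (V (k+1) \ V k) = 0 := by
    intro k
    have hle : ∀ m, c.μ (V (k+1) \ V k) ≤ c.μ (symmDiff (partUnion B (k+1) m) (V (k+1))) := by
      intro m
      have h0 : c.μ (partUnion B (k+1) m \ V k) = 0 := by
        refine le_antisymm ?_ (c.hnonneg _ (c.diff_mem (hUmem (k+1) m) (hVS k)))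
        calc c.μ (partUnion B (k+1) m \ V k)
            ≤ c.μ (partUnion B k (m+1) \ V k) :=
              c.mono (c.diff_mem (hUmem (k+1) m) (hVS k))
                (c.diff_mem (hUmem k (m+1)) (hVS k))
                (Set.diff_subset_diff_left (partUnion_succ_subset B k m))
          _ = 0 := hVnull k (m+1)
      have hsub : V (k+1) \ V k ⊆
          (V (k+1) \ partUnion B (k+1) m) ∪ (partUnion B (k+1) m \ V k) := by
        intro x hx
        by_cases hxu : x ∈ partUnion B (k+1) m
        · exact Or.inr ⟨hxu, hx.2⟩
        · exact Or.inl ⟨hx.1, hxu⟩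
      have h1 : c.μ (V (k+1) \ V k) ≤
          c.μ (V (k+1) \ partUnion B (k+1) m) + c.μ (partUnion B (k+1) m \ V k) :=
        le_trans (c.mono (c.diff_mem (hVS (k+1)) (hVS k))
          (c.hunion _ (c.diff_mem (hVS (k+1)) (hUmem (k+1) m)) _
            (c.diff_mem (hUmem (k+1) m) (hVS k))) hsub)
          (c.subadd (c.diff_mem (hVS (k+1)) (hUmem (k+1) m))
            (c.diff_mem (hUmem (k+1) m) (hVS k)))
      have h2 : c.μ (V (k+1) \ partUnion B (k+1) m) ≤
          c.μ (symmDiff (partUnion B (k+1) m) (V (k+1))) :=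
        c.mono (c.diff_mem (hVS (k+1)) (hUmem (k+1) m))
          (c.symmDiff_mem (hUmem (k+1) m) (hVS (k+1)))
          (fun x hx => Set.mem_symmDiff.2 (Or.inr ⟨hx.1, hx.2⟩))
      linarith
    refine le_antisymm ?_ (c.hnonneg _ (c.diff_mem (hVS (k+1)) (hVS k)))
    exact ge_of_tendsto (hVΔ (k+1)) (Eventually.of_forall hle)
  have hchain : ∀ j k, j ≤ k → c.μ (V k \ V j) = 0 := by
    intro j k hjk
    induction k with
    | zero =>
      have : j = 0 := Nat.le_zero.1 hjk
      subst this; simp [c.mu_empty]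
    | succ k ih =>
      rcases Nat.eq_or_lt_of_le hjk with h | h
      · subst h; simp [c.mu_empty]
      · have hj : j ≤ k := Nat.lt_succ_iff.1 h
        have h1 := hVVnull k
        have h2 := ih hj
        have hsub : V (k+1) \ V j ⊆ (V (k+1) \ V k) ∪ (V k \ V j) := by
          intro x hx
          by_cases hxk : x ∈ V k
          · exact Or.inr ⟨hxk, hx.2⟩
          · exact Or.inl ⟨hx.1, hxk⟩
        refine le_antisymm ?_ (c.hnonneg _ (c.diff_mem (hVS (k+1)) (hVS j)))
        calc c.μ (V (k+1) \ V j)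
            ≤ c.μ ((V (k+1) \ V k) ∪ (V k \ V j)) :=
              c.mono (c.diff_mem (hVS (k+1)) (hVS j))
                (c.hunion _ (c.diff_mem (hVS (k+1)) (hVS k)) _
                  (c.diff_mem (hVS k) (hVS j))) hsub
          _ ≤ c.μ (V (k+1) \ V k) + c.μ (V k \ V j) :=
              c.subadd (c.diff_mem (hVS (k+1)) (hVS k)) (c.diff_mem (hVS k) (hVS j))
          _ ≤ 0 := by rw [h1, h2]; norm_num
  -- W : decreasing intersections
  have hWS : ∀ k, partInter V k ∈ c.S := by
    intro k
    induction k with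
    | zero => exact hVS 0
    | succ k ih => rw [partInter_succ]; exact c.inter_mem ih (hVS (k+1))
  have hVWnull : ∀ k, c.μ (V k \ partInter V k) = 0 := by
    intro k
    induction k with
    | zero => rw [partInter_zero]; simp [c.mu_empty]
    | succ k ih =>
      have hsub : V (k+1) \ partInter V (k+1) ⊆
          (V (k+1) \ V k) ∪ (V k \ partInter V k) := by
        intro x hx
        rw [partInter_succ] at hx
        have hxw : x ∉ partInter V k := fun hw => hx.2 ⟨hw, hx.1⟩
        by_cases hxk : x ∈ V k
        · exact Or.inr ⟨hxk, hxw⟩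
        · exact Or.inl ⟨hx.1, hxk⟩
      refine le_antisymm ?_ (c.hnonneg _ (c.diff_mem (hVS (k+1)) (hWS (k+1))))
      calc c.μ (V (k+1) \ partInter V (k+1))
          ≤ c.μ ((V (k+1) \ V k) ∪ (V k \ partInter V k)) :=
            c.mono (c.diff_mem (hVS (k+1)) (hWS (k+1)))
              (c.hunion _ (c.diff_mem (hVS (k+1)) (hVS k)) _
                (c.diff_mem (hVS k) (hWS k))) hsub
        _ ≤ c.μ (V (k+1) \ V k) + c.μ (V k \ partInter V k) :=
            c.subadd (c.diff_mem (hVS (k+1)) (hVS k)) (c.diff_mem (hVS k) (hWS k))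
        _ ≤ 0 := by rw [hVVnull k, ih]; norm_num
  -- apply AP0 to complements of W
  obtain ⟨L', hL'S, hL'null, hL'tend⟩ := hAP0 (fun k => (partInter V k)ᶜ)
    (fun k => c.hcompl _ (hWS k))
    (fun m n h => Set.compl_subset_compl.2 (partInter_anti V h))
  have hCΔ : Tendsto (fun k => c.μ (symmDiff (partInter V k)ᶜ L')) atTop (nhds 0) :=
    c.tendsto_symmDiff_of_null _ _ (fun k => c.hcompl _ (hWS k)) hL'S hL'null hL'tend
  have hLS : L'ᶜ ∈ c.S := c.hcompl _ hL'S
  have hWL : ∀ k, symmDiff (partInter V k) L'ᶜ = symmDiff (partInter V k)ᶜ L' := by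
    intro k
    rw [← compl_symmDiff_compl, compl_compl]
  -- final bound on μ(B k ∆ L)
  have hBL : ∀ k, c.μ (symmDiff (B k) L'ᶜ) ≤
      (2:ℝ)⁻¹^(k+1) + c.μ (symmDiff (partInter V k)ᶜ L') := by
    intro k
    have t1 := c.triangle (hBS k) (hVS k) hLS
    have t2 := c.triangle (hVS k) (hWS k) hLS
    have hVW : c.μ (symmDiff (V k) (partInter V k)) = 0 := by
      rw [c.mu_symmDiff (hVS k) (hWS k), hVWnull k,
        Set.diff_eq_empty.2 (partInter_subset V k), c.mu_empty]
      norm_num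
    have := hBV k
    rw [hWL k] at t2
    linarith
  -- conclude
  refine ⟨L'ᶜ, hLS, ?_⟩
  rw [Metric.tendsto_atTop]
  intro ε hε
  have h1 : Tendsto (fun k : ℕ => (2:ℝ)⁻¹^(k+2)) atTop (nhds 0) := by
    have h := tendsto_pow_atTop_nhds_zero_of_lt_one
      (by norm_num : (0:ℝ) ≤ 2⁻¹) (by norm_num : (2:ℝ)⁻¹ < 1)
    exact h.comp (tendsto_add_atTop_nat 2)
  have h2 : Tendsto (fun k : ℕ => (2:ℝ)⁻¹^(k+1)) atTop (nhds 0) := by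
    have h := tendsto_pow_atTop_nhds_zero_of_lt_one
      (by norm_num : (0:ℝ) ≤ 2⁻¹) (by norm_num : (2:ℝ)⁻¹ < 1)
    exact h.comp (tendsto_add_atTop_nat 1)
  have htot : Tendsto (fun k => (2:ℝ)⁻¹^(k+2) +
      ((2:ℝ)⁻¹^(k+1) + c.μ (symmDiff (partInter V k)ᶜ L'))) atTop (nhds 0) := by
    have := h1.add (h2.add hCΔ)
    simpa using this
  obtain ⟨k, hk⟩ := (htot.eventually (gt_mem_nhds hε)).exists
  refine ⟨idx k, fun n hn => ?_⟩
  have hAnB : c.μ (symmDiff (A n) (B k)) < (2:ℝ)⁻¹^(k+2) :=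
    hN k n (le_trans (hidxge k) hn) (idx k) (hidxge k)
  have ht := c.triangle (hAS n) (hBS k) hLS
  have h3 := hBL k
  have hfin : c.μ (symmDiff (A n) L'ᶜ) < ε := by linarith
  have hnn : (0:ℝ) ≤ min 1 (c.μ (symmDiff (A n) L'ᶜ)) :=
    le_min (by norm_num) (c.hnonneg _ (c.symmDiff_mem (hAS n) hLS))
  rw [Real.dist_eq, sub_zero, abs_of_nonneg hnn]
  exact lt_of_le_of_lt (min_le_right _ _) hfin


end Ctx
end CompChar

/-- For a field of subsets `S` of a nonempty set `X` and a nonnegative,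
finitely additive, bounded map `μ : S → [0,∞)`, the pseudometric space `(S, d_μ)` is
complete iff for every increasing sequence `(Aₙ)` in `S` there exists `A ∈ S` such that
`μ(Aₙ \ A) = 0` for all `n` and `μ(A) = lim μ(Aₙ)`. -/
theorem completeness_characterization_additive
    {X : Type*} [Nonempty X] (S : Set (Set X))
    (hSne : S.Nonempty)
    (hSunion : ∀ A ∈ S, ∀ B ∈ S, A ∪ B ∈ S)
    (hScompl : ∀ A ∈ S, Aᶜ ∈ S)
    (μ : Set X → ℝ)
    (hμnonneg : ∀ A ∈ S, 0 ≤ μ A)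
    (hμadd : ∀ A ∈ S, ∀ B ∈ S, Disjoint A B → μ (A ∪ B) = μ A + μ B)
    (hμbdd : ∃ M : ℝ, ∀ A ∈ S, μ A ≤ M) :
    -- completeness of (S, d_μ)
    (∀ A : ℕ → Set X, (∀ n, A n ∈ S) →
      (∀ ε : ℝ, 0 < ε → ∃ N : ℕ, ∀ m ≥ N, ∀ n ≥ N,
        min 1 (μ (symmDiff (A m) (A n))) < ε) →
      ∃ L ∈ S, Tendsto (fun n => min 1 (μ (symmDiff (A n) L))) atTop (nhds 0))
    ↔
    -- the AP0 condition
    (∀ A : ℕ → Set X, (∀ n, A n ∈ S) → (∀ m n, m ≤ n → A m ⊆ A n) →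
      ∃ L ∈ S, (∀ n, μ (A n \ L) = 0) ∧
        Tendsto (fun n => μ (A n)) atTop (nhds (μ L))) := by
  let c : CompChar.Ctx X := ⟨S, μ, hSne, hSunion, hScompl, hμnonneg, hμadd⟩
  constructor
  · intro h
    exact c.forward hμbdd h
  · intro h
    exact c.backward h
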